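/- Let (X,d) be a metric space, μ a Borel measure on X, and o ∈ X. Assume that μ(B(o,r)) < ∞ for every r > 0, that the function r ↦ μ(B(o,r)) is locally Lipschitz continuous on (0,∞), and that μ({o}) = 0. Then for every μ-measurable function f : X → ℝ that is bounded on bounded subsets of X and every R > 0, one has ∫_{B(o,R)} f dμ = ∫₀^R |f|_{∂B(o,r)} dr. -/

import Mathlib

open MeasureTheory Metric Filter Set


lemma tendsto_quot_of_hasDerivAt {g : ℝ → ℝ} {r c : ℝ} (h : HasDerivAt g c r) :
    Tendsto (fun δ : ℝ => (g (r + δ) - g r) / δ) (nhdsWithin 0 (Ioi 0)) (nhds c) := by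
  have h1 := hasDerivAt_iff_tendsto_slope.1 h
  have hmap : Tendsto (fun δ : ℝ => r + δ) (nhdsWithin 0 (Ioi 0)) (nhdsWithin r {r}ᶜ) := by
    rw [tendsto_nhdsWithin_iff]
    refine ⟨?_, ?_⟩
    · have h2 : Tendsto (fun δ : ℝ => r + δ) (nhds 0) (nhds (r + 0)) :=
        (continuous_const.add continuous_id).tendsto 0
      simpa using h2.mono_left nhdsWithin_le_nhds
    · filter_upwards [self_mem_nhdsWithin] with δ (hδ : δ ∈ Ioi 0)
      simp only [mem_compl_iff, mem_singleton_iff]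
      intro hc
      have : δ = 0 := by linarith [congrArg (fun x => x - r) hc]
      exact absurd this (ne_of_gt hδ)
  have h3 := h1.comp hmap
  have : (slope g r) ∘ (fun δ : ℝ => r + δ) = fun δ : ℝ => (g (r + δ) - g r) / δ := by
    funext δ
    simp [slope_def_field, Function.comp]
  rwa [this] at h3

lemma limsup_quot_of_hasDerivAt {g : ℝ → ℝ} {r c : ℝ} (h : HasDerivAt g c r) :
    limsup (fun δ : ℝ => (g (r + δ) - g r) / δ) (nhdsWithin 0 (Ioi 0)) = c :=
  (tendsto_quot_of_hasDerivAt h).limsup_eq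

lemma tendsto_invSeq : Tendsto (fun n : ℕ => ((n : ℝ) + 1)⁻¹) atTop (nhdsWithin 0 (Ioi 0)) := by
  rw [tendsto_nhdsWithin_iff]
  constructor
  · exact tendsto_one_div_add_atTop_nhds_zero_nat.congr (by intro n; simp [one_div])
  · filter_upwards with n
    have : (0:ℝ) < (n : ℝ) + 1 := by positivity
    exact inv_pos.2 this

lemma tendsto_quotSeq_of_hasDerivAt {g : ℝ → ℝ} {r c : ℝ} (h : HasDerivAt g c r) :
    Tendsto (fun n : ℕ => (g (r + ((n:ℝ)+1)⁻¹) - g r) / ((n:ℝ)+1)⁻¹) atTop (nhds c) :=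
  (tendsto_quot_of_hasDerivAt h).comp tendsto_invSeq

lemma exists_lipschitzOnWith_Icc {g : ℝ → ℝ} {a b : ℝ}
    (h : ∀ x ∈ Icc a b, ∃ K : NNReal, ∃ t ∈ nhds x, LipschitzOnWith K g t) :
    ∃ K : NNReal, LipschitzOnWith K g (Icc a b) := by
  rcases lt_or_ge b a with hab | hab
  · exact ⟨0, by simp [Icc_eq_empty_of_lt hab]⟩
  choose K t ht hK using h
  have hU : ∀ (x : ℝ) (hx : x ∈ Icc a b), interior (t x hx) ∈ nhds x :=
    fun x hx => interior_mem_nhds.2 (ht x hx)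
  obtain ⟨F, hF⟩ := isCompact_Icc.elim_nhds_subcover' (fun x hx => interior (t x hx)) hU
  set Km : NNReal := F.sup (fun x => K x x.2) with hKm
  -- continuity of g on Icc a b
  have hgc : ∀ x ∈ Icc a b, ContinuousAt g x := by
    intro x hx
    exact ((hK x hx).continuousOn).continuousAt (ht x hx)
  refine ⟨Km, ?_⟩
  rw [lipschitzOnWith_iff_dist_le_mul]
  have key : ∀ x ∈ Icc a b, ∀ y ∈ Icc a b, x ≤ y → dist (g y) (g x) ≤ Km * (y - x) := by
    intro x hx y hy hxy
    set s : Set ℝ := {z | dist (g z) (g x) ≤ Km * (z - x)} with hs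
    have hsub : Icc x y ⊆ Icc a b := Icc_subset_Icc hx.1 hy.2
    have hclosed : IsClosed (s ∩ Icc x y) := by
      have hcont : ContinuousOn (fun z => dist (g z) (g x) - Km * (z - x)) (Icc x y) := by
        intro z hz
        have hg' : ContinuousAt g z := hgc z (hsub hz)
        have h1 : ContinuousAt (fun z => dist (g z) (g x) - Km * (z - x)) z := by fun_prop
        exact h1.continuousWithinAt
      have : s ∩ Icc x y = Icc x y ∩ (fun z => dist (g z) (g x) - Km * (z - x)) ⁻¹' (Iic 0) := by
        ext z
        simp only [hs, mem_inter_iff, mem_setOf_eq, mem_preimage, mem_Iic]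
        constructor
        · rintro ⟨h1, h2⟩; exact ⟨h2, by linarith⟩
        · rintro ⟨h2, h1⟩; exact ⟨by linarith, h2⟩
      rw [this]
      exact hcont.preimage_isClosed_of_isClosed isClosed_Icc isClosed_Iic
    have hmem : Icc x y ⊆ s := by
      apply hclosed.Icc_subset_of_forall_exists_gt
      · simp [hs]
      · rintro z ⟨hzs, hz⟩ w hw
        have hzab : z ∈ Icc a b := hsub ⟨hz.1, hz.2.le⟩
        obtain ⟨i, hiF, hzi⟩ : ∃ i ∈ F, z ∈ interior (t i i.2) := by
          have := hF hzab
          simpa using this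
        obtain ⟨ε, hε, hball⟩ := Metric.mem_nhds_iff.1 (interior_mem_nhds.2
          (mem_interior_iff_mem_nhds.1 hzi))
        set w' : ℝ := min w (z + ε / 2) with hw'
        have hzw' : z < w' := lt_min hw (by linarith)
        have hw'ball : w' ∈ ball z ε := by
          rw [mem_ball, Real.dist_eq, abs_of_pos (by linarith)]
          have : w' ≤ z + ε / 2 := min_le_right _ _
          linarith
        have hw't : w' ∈ t i i.2 := interior_subset (hball hw'ball)
        have hzt : z ∈ t i i.2 := interior_subset hzi
        refine ⟨w', ⟨?_, hzw', min_le_left _ _⟩⟩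
        have hKi : K i i.2 ≤ Km := Finset.le_sup (f := fun x : Icc a b => K ↑x x.2) hiF
        have h1 : dist (g w') (g z) ≤ (K i i.2 : ℝ) * dist w' z :=
          LipschitzOnWith.dist_le_mul (hK i i.2) w' hw't z hzt
        have h2 : dist w' z = w' - z := by
          rw [Real.dist_eq, abs_of_pos (by linarith)]
        have h3 : dist (g w') (g x) ≤ dist (g w') (g z) + dist (g z) (g x) :=
          dist_triangle _ _ _
        have h4 : dist (g z) (g x) ≤ Km * (z - x) := hzs
        have h5 : (K i i.2 : ℝ) ≤ (Km : ℝ) := hKi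
        have hKm0 : (0:ℝ) ≤ Km := Km.coe_nonneg
        simp only [hs, mem_setOf_eq]
        calc dist (g w') (g x) ≤ (K i i.2 : ℝ) * (w' - z) + Km * (z - x) := by
              rw [h2] at h1; linarith
          _ ≤ Km * (w' - z) + Km * (z - x) := by nlinarith
          _ = Km * (w' - x) := by ring
    exact hmem ⟨hxy, le_refl y⟩
  intro x hx y hy
  rcases le_total x y with hxy | hxy
  · calc dist (g x) (g y) = dist (g y) (g x) := dist_comm _ _
      _ ≤ Km * (y - x) := key x hx y hy hxy
      _ = Km * dist x y := by rw [Real.dist_eq, abs_of_nonpos (by linarith), neg_sub]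
  · calc dist (g x) (g y) ≤ Km * (x - y) := key y hy x hx hxy
      _ = Km * dist x y := by rw [Real.dist_eq, abs_of_nonneg (by linarith)]

lemma lipschitz_integral_deriv {g : ℝ → ℝ} {K : NNReal} (hg : LipschitzWith K g)
    {a b : ℝ} (hab : a ≤ b) :
    ∫ r in a..b, deriv g r = g b - g a := by
  have hgc : Continuous g := hg.continuous
  have hd : ∀ᵐ r : ℝ, DifferentiableAt ℝ g r := hg.ae_differentiableAt (μ := volume)
  set δ : ℕ → ℝ := fun n => ((n:ℝ)+1)⁻¹ with hδ
  have hδpos : ∀ n, 0 < δ n := fun n => by positivity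
  -- quotient functions
  set Fn : ℕ → ℝ → ℝ := fun n r => (g (r + δ n) - g r) / δ n with hFn
  have hbound : ∀ n r, |Fn n r| ≤ (K : ℝ) := by
    intro n r
    rw [hFn]
    simp only
    rw [abs_div, abs_of_pos (hδpos n)]
    rw [div_le_iff₀ (hδpos n)]
    have := hg.dist_le_mul (r + δ n) r
    rw [Real.dist_eq, Real.dist_eq] at this
    simpa [abs_of_pos (hδpos n)] using this
  -- a.e. convergence
  have hconv : ∀ᵐ r : ℝ, Tendsto (fun n => Fn n r) atTop (nhds (deriv g r)) := by
    filter_upwards [hd] with r hr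
    exact tendsto_quotSeq_of_hasDerivAt hr.hasDerivAt
  -- dominated convergence on Ioc a b
  have hmeasFn : ∀ n, AEStronglyMeasurable (Fn n) (volume.restrict (Ioc a b)) := by
    intro n
    exact (((hgc.comp (continuous_id.add continuous_const)).sub hgc).div_const _).aestronglyMeasurable.restrict
  have hDCT : Tendsto (fun n => ∫ r in Ioc a b, Fn n r) atTop
      (nhds (∫ r in Ioc a b, deriv g r)) := by
    apply tendsto_integral_of_dominated_convergence (fun _ => (K : ℝ)) hmeasFn
    · exact integrable_const _
    · intro n
      filter_upwards with r
      simpa [Real.norm_eq_abs] using hbound n r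
    · exact ae_restrict_of_ae hconv
  -- compute integral of Fn
  have hgint : ∀ c d : ℝ, IntervalIntegrable g volume c d := fun c d =>
    hgc.intervalIntegrable c d
  have hInt : ∀ n, ∫ r in Ioc a b, Fn n r =
      ((∫ x in b..(b + δ n), g x) - ∫ x in a..(a + δ n), g x) / δ n := by
    intro n
    rw [← intervalIntegral.integral_of_le hab]
    have h1 : ∫ r in a..b, Fn n r = ((∫ r in a..b, g (r + δ n)) - ∫ r in a..b, g r) / δ n := by
      rw [hFn]
      simp only
      rw [intervalIntegral.integral_div]
      congr 1
      exact intervalIntegral.integral_sub ((hgc.comp (continuous_id.add continuous_const)).intervalIntegrable _ _) (hgint a b)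
    rw [h1, intervalIntegral.integral_comp_add_right]
    congr 1
    have h2 : (∫ x in (a + δ n)..(b + δ n), g x) =
        (∫ x in (a + δ n)..b, g x) + ∫ x in b..(b + δ n), g x :=
      (intervalIntegral.integral_add_adjacent_intervals (hgint _ _) (hgint _ _)).symm
    have h3 : (∫ x in a..b, g x) = (∫ x in a..(a + δ n), g x) + ∫ x in (a + δ n)..b, g x :=
      (intervalIntegral.integral_add_adjacent_intervals (hgint _ _) (hgint _ _)).symm
    rw [h2, h3]
    ring
  -- limits of the two endpoint terms
  have hend : ∀ c : ℝ, Tendsto (fun n => (∫ x in c..(c + δ n), g x) / δ n) atTop (nhds (g c)) := by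
    intro c
    have hΦ : HasDerivAt (fun u => ∫ x in c..u, g x) (g c) c :=
      intervalIntegral.integral_hasDerivAt_right (hgint c c)
        (hgc.stronglyMeasurable.stronglyMeasurableAtFilter) hgc.continuousAt
    have h4 := tendsto_quotSeq_of_hasDerivAt hΦ
    have h5 : (∫ x in c..c, g x) = 0 := intervalIntegral.integral_same
    apply h4.congr
    intro n
    rw [h5, sub_zero]
  have hlim2 : Tendsto (fun n => ∫ r in Ioc a b, Fn n r) atTop (nhds (g b - g a)) := by
    have : Tendsto (fun n => (∫ x in b..(b + δ n), g x) / δ n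
        - (∫ x in a..(a + δ n), g x) / δ n) atTop (nhds (g b - g a)) :=
      (hend b).sub (hend a)
    apply this.congr
    intro n
    rw [hInt n]
    ring
  have := tendsto_nhds_unique hDCT hlim2
  rw [intervalIntegral.integral_of_le hab]
  exact this

lemma abs_deriv_le_of_lipschitz {G : ℝ → ℝ} {K : NNReal} (hG : LipschitzWith K G) (r : ℝ) :
    |deriv G r| ≤ K := by
  by_cases h : DifferentiableAt ℝ G r
  · have ht := tendsto_quot_of_hasDerivAt h.hasDerivAt
    have habs : Tendsto (fun δ : ℝ => |(G (r + δ) - G r) / δ|) (nhdsWithin 0 (Ioi 0))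
        (nhds |deriv G r|) := ht.abs
    refine le_of_tendsto habs ?_
    filter_upwards [self_mem_nhdsWithin] with δ (hδ : δ ∈ Ioi 0)
    have hδ0 : (0:ℝ) < δ := hδ
    rw [abs_div, abs_of_pos hδ0, div_le_iff₀ hδ0]
    have := hG.dist_le_mul (r + δ) r
    rw [Real.dist_eq, Real.dist_eq] at this
    simpa [abs_of_pos hδ0] using this
  · rw [deriv_zero_of_not_differentiableAt h]
    simp

lemma deriv_nonneg_of_monotone {m : ℝ → ℝ} (hm : Monotone m) {r : ℝ}
    (h : DifferentiableAt ℝ m r) : 0 ≤ deriv m r := by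
  have ht := tendsto_quot_of_hasDerivAt h.hasDerivAt
  refine ge_of_tendsto ht ?_
  filter_upwards [self_mem_nhdsWithin] with δ (hδ : δ ∈ Ioi 0)
  have hδ0 : (0:ℝ) < δ := hδ
  exact div_nonneg (sub_nonneg.2 (hm (by linarith))) hδ0.le


/-- The boundary integral of `f` on `∂B(o,r)`:
`|f|_{∂B(o,r)} = limsup_{δ→0⁺} (1/δ) ∫_{B(o,r+δ)∖B(o,r)} f dμ`. -/
noncomputable def bdryIntegral {X : Type*} [MetricSpace X] [MeasurableSpace X]
    (μ : Measure X) (f : X → ℝ) (o : X) (r : ℝ) : ℝ :=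
  limsup (fun δ : ℝ => (∫ z in ball o (r + δ) \ ball o r, f z ∂μ) / δ)
    (nhdsWithin 0 (Ioi 0))

theorem stmt_4 {X : Type*} [MetricSpace X] [MeasurableSpace X] [BorelSpace X]
    (μ : Measure X) (o : X)
    (hfin : ∀ r : ℝ, 0 < r → μ (ball o r) < ⊤)
    (hLip : ∀ a : ℝ, 0 < a → ∃ (K : NNReal) (t : Set ℝ), t ∈ nhdsWithin a (Ioi 0) ∧
      LipschitzOnWith K (fun r : ℝ => (μ (ball o r)).toReal) t)
    (hpt : μ {o} = 0)
    (f : X → ℝ) (hf : Measurable f)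
    (hbd : ∀ s : Set X, Bornology.IsBounded s → ∃ C : ℝ, ∀ z ∈ s, |f z| ≤ C) :
    ∀ R : ℝ, 0 < R →
      ∫ z in ball o R, f z ∂μ = ∫ r in (0:ℝ)..R, bdryIntegral μ f o r := by
  intro R hR
  obtain ⟨C0, hC0⟩ := hbd (ball o (R + 2)) isBounded_ball
  set C : ℝ := max C0 0 with hCdef
  have hCb : ∀ z ∈ ball o (R + 2), |f z| ≤ C := fun z hz => (hC0 z hz).trans (le_max_left _ _)
  have hCnn : (0:ℝ) ≤ C := le_max_right _ _
  set m : ℝ → ℝ := fun r => (μ (ball o r)).toReal with hmdef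
  set F : ℝ → ℝ := fun r => ∫ z in ball o r, f z ∂μ with hFdef
  have hfin' : ∀ r : ℝ, μ (ball o r) < ⊤ := by
    intro r
    rcases lt_or_ge 0 r with h | h
    · exact hfin r h
    · rw [ball_eq_empty.2 h]; simp
  have hm_mono : Monotone m := fun x y hxy =>
    ENNReal.toReal_mono (hfin' y).ne (measure_mono (ball_subset_ball hxy))
  have hm_nonneg : ∀ r, 0 ≤ m r := fun r => ENNReal.toReal_nonneg
  have hint : ∀ r : ℝ, r ≤ R + 2 → IntegrableOn f (ball o r) μ := by
    intro r hr
    apply Measure.integrableOn_of_bounded (M := C) (hfin' r).ne hf.aestronglyMeasurable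
    rw [ae_restrict_iff' measurableSet_ball]
    filter_upwards with z hz
    exact hCb z (ball_subset_ball hr hz)
  have hannulus : ∀ x y : ℝ, x ≤ y → y ≤ R + 2 →
      (∫ z in ball o y \ ball o x, f z ∂μ) = F y - F x := by
    intro x y hxy hy
    rw [hFdef]
    exact integral_diff measurableSet_ball (hint y hy) (ball_subset_ball hxy)
  have hmdiff : ∀ x y : ℝ, x ≤ y → (μ (ball o y \ ball o x)).toReal = m y - m x := by
    intro x y hxy
    rw [measure_diff (ball_subset_ball hxy) measurableSet_ball.nullMeasurableSet (hfin' x).ne,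
      ENNReal.toReal_sub_of_le (measure_mono (ball_subset_ball hxy)) (hfin' y).ne]
  have hFbnd : ∀ x y : ℝ, x ≤ y → y ≤ R + 2 → |F y - F x| ≤ C * (m y - m x) := by
    intro x y hxy hy
    rw [← hannulus x y hxy hy, ← hmdiff x y hxy]
    have hμfin : μ (ball o y \ ball o x) < ⊤ :=
      lt_of_le_of_lt (measure_mono diff_subset) (hfin' y)
    have := norm_setIntegral_le_of_norm_le_const (μ := μ) (s := ball o y \ ball o x)
      (f := f) (C := C) hμfin (fun z hz => by
        simpa [Real.norm_eq_abs] using hCb z (ball_subset_ball hy hz.1))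
    rw [Real.norm_eq_abs] at this
    exact this
  -- local Lipschitz data for m and F near each point of (0, R+1]
  have hLiploc : ∀ x : ℝ, 0 < x → x ≤ R + 1 → ∃ K : NNReal, ∃ t ∈ nhds x,
      LipschitzOnWith K m t ∧ LipschitzOnWith (C.toNNReal * K) F t := by
    intro x hx hxR
    obtain ⟨K, t, ht, hK⟩ := hLip x hx
    rw [nhdsWithin_eq_nhds.2 (isOpen_Ioi.mem_nhds hx)] at ht
    refine ⟨K, t ∩ Ioo 0 (R + 2), Filter.inter_mem ht
      (isOpen_Ioo.mem_nhds ⟨hx, by linarith⟩), hK.mono inter_subset_left, ?_⟩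
    rw [lipschitzOnWith_iff_dist_le_mul]
    have key : ∀ u ∈ t ∩ Ioo 0 (R+2), ∀ v ∈ t ∩ Ioo 0 (R+2), u ≤ v →
        dist (F v) (F u) ≤ (C.toNNReal * K : NNReal) * dist v u := by
      intro u hu v hv huv
      have h1 : |F v - F u| ≤ C * (m v - m u) := hFbnd u v huv hv.2.2.le
      have h2 : m v - m u ≤ K * dist v u := by
        have := hK.dist_le_mul v hv.1 u hu.1
        rw [Real.dist_eq] at this
        calc m v - m u ≤ |m v - m u| := le_abs_self _
          _ ≤ K * dist v u := by rwa [Real.dist_eq]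
      have hKnn : (0:ℝ) ≤ K := K.coe_nonneg
      rw [Real.dist_eq]
      push_cast
      rw [Real.coe_toNNReal _ hCnn]
      calc |F v - F u| ≤ C * (m v - m u) := h1
        _ ≤ C * (K * |v - u|) := by
            apply mul_le_mul_of_nonneg_left _ hCnn
            rwa [Real.dist_eq] at h2
        _ = C * K * |v - u| := by ring
    intro u hu v hv
    rcases le_total u v with huv | huv
    · rw [dist_comm u v, dist_comm (F u) (F v)]
      exact key u hu v hv huv
    · exact key v hv u hu huv
  -- per-epsilon facts
  have perEps : ∀ ε : ℝ, 0 < ε → ε ≤ R →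
      (∀ᵐ r : ℝ, r ∈ Ioo ε (R+1) → DifferentiableAt ℝ F r) ∧
      IntegrableOn (deriv F) (Ioc ε R) volume ∧
      IntegrableOn (deriv m) (Ioc ε R) volume ∧
      (∫ r in Ioc ε R, deriv F r) = F R - F ε ∧
      (∫ r in Ioc ε R, deriv m r) = m R - m ε := by
    intro ε hε hεR
    have hhalf : 0 < ε/2 := by linarith
    have hlocm : ∀ x ∈ Icc (ε/2) (R+1), ∃ K : NNReal, ∃ t ∈ nhds x, LipschitzOnWith K m t := by
      intro x hx
      obtain ⟨K, t, ht, h1, _⟩ := hLiploc x (lt_of_lt_of_le hhalf hx.1) hx.2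
      exact ⟨K, t, ht, h1⟩
    have hlocF : ∀ x ∈ Icc (ε/2) (R+1), ∃ K : NNReal, ∃ t ∈ nhds x, LipschitzOnWith K F t := by
      intro x hx
      obtain ⟨K, t, ht, _, h2⟩ := hLiploc x (lt_of_lt_of_le hhalf hx.1) hx.2
      exact ⟨_, t, ht, h2⟩
    obtain ⟨Km, hKm⟩ := exists_lipschitzOnWith_Icc hlocm
    obtain ⟨KF, hKF⟩ := exists_lipschitzOnWith_Icc hlocF
    obtain ⟨Gm, hGmlip, hGmeq⟩ := hKm.extend_real
    obtain ⟨GF, hGFlip, hGFeq⟩ := hKF.extend_real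
    have hmemIcc : ∀ r ∈ Ioo (ε/2) (R+1), Icc (ε/2) (R+1) ∈ nhds r :=
      fun r hr => Icc_mem_nhds hr.1 hr.2
    have hFev : ∀ r ∈ Ioo (ε/2) (R+1), F =ᶠ[nhds r] GF :=
      fun r hr => eventuallyEq_of_mem (hmemIcc r hr) hGFeq
    have hmev : ∀ r ∈ Ioo (ε/2) (R+1), m =ᶠ[nhds r] Gm :=
      fun r hr => eventuallyEq_of_mem (hmemIcc r hr) hGmeq
    have hsub1 : Icc ε R ⊆ Ioo (ε/2) (R+1) := fun r hr =>
      ⟨lt_of_lt_of_le (by linarith) hr.1, lt_of_le_of_lt hr.2 (by linarith)⟩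
    have hderivF : ∀ r ∈ Icc ε R, deriv F r = deriv GF r :=
      fun r hr => (hFev r (hsub1 hr)).deriv_eq
    have hderivm : ∀ r ∈ Icc ε R, deriv m r = deriv Gm r :=
      fun r hr => (hmev r (hsub1 hr)).deriv_eq
    have hR1 : ε ∈ Icc (ε/2) (R+1) := ⟨by linarith, by linarith⟩
    have hR2 : R ∈ Icc (ε/2) (R+1) := ⟨by linarith, by linarith⟩
    refine ⟨?_, ?_, ?_, ?_, ?_⟩
    · filter_upwards [hGFlip.ae_differentiableAt (μ := volume)] with r hr hrm
      have hr2 : r ∈ Ioo (ε/2) (R+1) := ⟨by linarith [hrm.1], hrm.2⟩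
      exact hr.congr_of_eventuallyEq (hFev r hr2)
    · apply Measure.integrableOn_of_bounded (M := (KF:ℝ)) measure_Ioc_lt_top.ne
        (measurable_deriv F).aestronglyMeasurable
      rw [ae_restrict_iff' measurableSet_Ioc]
      filter_upwards with r hr
      rw [Real.norm_eq_abs, hderivF r ⟨hr.1.le, hr.2⟩]
      exact abs_deriv_le_of_lipschitz hGFlip r
    · apply Measure.integrableOn_of_bounded (M := (Km:ℝ)) measure_Ioc_lt_top.ne
        (measurable_deriv m).aestronglyMeasurable
      rw [ae_restrict_iff' measurableSet_Ioc]
      filter_upwards with r hr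
      rw [Real.norm_eq_abs, hderivm r ⟨hr.1.le, hr.2⟩]
      exact abs_deriv_le_of_lipschitz hGmlip r
    · rw [← intervalIntegral.integral_of_le hεR]
      have heq : ∫ r in ε..R, deriv F r = ∫ r in ε..R, deriv GF r := by
        apply intervalIntegral.integral_congr
        intro r hr
        rw [uIcc_of_le hεR] at hr
        exact hderivF r hr
      rw [heq, lipschitz_integral_deriv hGFlip hεR, ← hGFeq hR1, ← hGFeq hR2]
    · rw [← intervalIntegral.integral_of_le hεR]
      have heq : ∫ r in ε..R, deriv m r = ∫ r in ε..R, deriv Gm r := by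
        apply intervalIntegral.integral_congr
        intro r hr
        rw [uIcc_of_le hεR] at hr
        exact hderivm r hr
      rw [heq, lipschitz_integral_deriv hGmlip hεR, ← hGmeq hR1, ← hGmeq hR2]
  -- sequence tending to 0
  set e : ℕ → ℝ := fun n => min R ((n:ℝ)+1)⁻¹ with hedef
  have hepos : ∀ n, 0 < e n := fun n => lt_min hR (by positivity)
  have heR : ∀ n, e n ≤ R := fun n => min_le_left _ _
  have heanti : Antitone e := by
    intro i j hij
    apply min_le_min (le_refl R)
    apply inv_anti₀ (by positivity)
    have : (i:ℝ) ≤ (j:ℝ) := Nat.cast_le.2 hij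
    linarith
  have he0 : Tendsto e atTop (nhds 0) := by
    have h1 : Tendsto (fun n : ℕ => ((n:ℝ)+1)⁻¹) atTop (nhds 0) :=
      tendsto_invSeq.mono_right nhdsWithin_le_nhds
    exact squeeze_zero (fun n => (hepos n).le) (fun n => min_le_right _ _) h1
  have hball_inter : (⋂ n, ball o (e n)) = {o} := by
    ext x
    simp only [mem_iInter, mem_ball, mem_singleton_iff]
    constructor
    · intro h
      have hd : dist x o ≤ 0 := ge_of_tendsto he0 (Eventually.of_forall fun n => (h n).le)
      have := dist_nonneg (x := x) (y := o)
      rw [← dist_eq_zero]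
      linarith
    · rintro rfl n
      simpa using hepos n
  have hme0 : Tendsto (fun n => m (e n)) atTop (nhds 0) := by
    have hμe : Tendsto (fun n => μ (ball o (e n))) atTop (nhds (μ (⋂ n, ball o (e n)))) := by
      apply tendsto_measure_iInter_atTop
        (fun n => measurableSet_ball.nullMeasurableSet)
        (fun i j hij => ball_subset_ball (heanti hij))
      exact ⟨0, (hfin' (e 0)).ne⟩
    rw [hball_inter, hpt] at hμe
    have := (ENNReal.tendsto_toReal (by simp)).comp hμe
    exact this
  -- a.e. differentiability of F on (0, R)
  have haeDiffF : ∀ᵐ r : ℝ, r ∈ Ioo 0 R → DifferentiableAt ℝ F r := by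
    have hall : ∀ᵐ r : ℝ, ∀ n : ℕ, r ∈ Ioo (e n) (R+1) → DifferentiableAt ℝ F r :=
      ae_all_iff.2 fun n => (perEps (e n) (hepos n) (heR n)).1
    filter_upwards [hall] with r hr hrm
    obtain ⟨n, hn⟩ : ∃ n, e n < r := ((tendsto_order.1 he0).2 r hrm.1).exists
    exact hr n ⟨hn, by linarith [hrm.2]⟩
  have haeDiffm : ∀ᵐ r : ℝ, DifferentiableAt ℝ m r := hm_mono.ae_differentiableAt
  have haem_nonneg : ∀ᵐ r : ℝ, 0 ≤ deriv m r := by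
    filter_upwards [haeDiffm] with r hr using deriv_nonneg_of_monotone hm_mono hr
  -- pointwise identification of bdryIntegral with deriv F, and comparison
  have hptwise : ∀ r ∈ Ioo (0:ℝ) R, DifferentiableAt ℝ F r → DifferentiableAt ℝ m r →
      bdryIntegral μ f o r = deriv F r ∧ |deriv F r| ≤ C * deriv m r := by
    intro r hr hdF hdm
    have hpos2 : (0:ℝ) < R + 2 - r := by linarith [hr.2]
    have hev : ∀ᶠ δ in nhdsWithin (0:ℝ) (Ioi 0),
        (∫ z in ball o (r + δ) \ ball o r, f z ∂μ) / δ = (F (r + δ) - F r) / δ := by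
      filter_upwards [Ioo_mem_nhdsGT_of_mem (⟨le_refl (0:ℝ), hpos2⟩)] with δ hδ
      rw [hannulus r (r+δ) (by linarith [hδ.1]) (by linarith [hδ.2])]
    constructor
    · rw [bdryIntegral, limsup_congr hev]
      exact limsup_quot_of_hasDerivAt hdF.hasDerivAt
    · have htF : Tendsto (fun δ => |(F (r + δ) - F r)/δ|) (nhdsWithin 0 (Ioi 0))
          (nhds |deriv F r|) := (tendsto_quot_of_hasDerivAt hdF.hasDerivAt).abs
      have htm : Tendsto (fun δ => C * ((m (r + δ) - m r)/δ)) (nhdsWithin 0 (Ioi 0))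
          (nhds (C * deriv m r)) := (tendsto_quot_of_hasDerivAt hdm.hasDerivAt).const_mul C
      refine le_of_tendsto_of_tendsto htF htm ?_
      filter_upwards [Ioo_mem_nhdsGT_of_mem (⟨le_refl (0:ℝ), hpos2⟩)] with δ hδ
      have h1 : |F (r+δ) - F r| ≤ C * (m (r+δ) - m r) :=
        hFbnd r (r+δ) (by linarith [hδ.1]) (by linarith [hδ.2])
      have hδ0 : (0:ℝ) < δ := hδ.1
      show |(F (r + δ) - F r)/δ| ≤ C * ((m (r + δ) - m r)/δ)
      rw [abs_div, abs_of_pos hδ0, mul_div_assoc']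
      gcongr
  have hMain : ∀ᵐ r : ℝ, r ∈ Ioo (0:ℝ) R →
      (bdryIntegral μ f o r = deriv F r ∧ |deriv F r| ≤ C * deriv m r) := by
    filter_upwards [haeDiffF, haeDiffm] with r h1 h2 hr
    exact hptwise r hr (h1 hr) h2
  -- lintegral of deriv m over (0, R]
  have hmeasm : Measurable (deriv m) := measurable_deriv m
  set φ : ℝ → ENNReal := fun r => ENNReal.ofReal (deriv m r) with hφ
  have hφmeas : Measurable φ := hmeasm.ennreal_ofReal
  have hsetmono : Monotone (fun n => Ioc (e n) R) := fun i j hij =>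
    Ioc_subset_Ioc_left (heanti hij)
  have hlin : ∫⁻ r in Ioc 0 R, φ r = ENNReal.ofReal (m R) := by
    have h1 : ∀ n, ∫⁻ r in Ioc (e n) R, φ r = ENNReal.ofReal (m R - m (e n)) := by
      intro n
      obtain ⟨_, _, hintm, _, hvalm⟩ := perEps (e n) (hepos n) (heR n)
      rw [← hvalm, ofReal_integral_eq_lintegral_ofReal hintm (ae_restrict_of_ae haem_nonneg)]
    have h2 : Monotone (fun n => (Ioc (e n) R).indicator φ) := fun i j hij =>
      indicator_le_indicator_of_subset (hsetmono hij) (fun r => zero_le)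
    have h3 : ∫⁻ r, ⨆ n, (Ioc (e n) R).indicator φ r = ⨆ n, ∫⁻ r, (Ioc (e n) R).indicator φ r :=
      lintegral_iSup (fun n => hφmeas.indicator measurableSet_Ioc) h2
    have h4 : (fun r => ⨆ n, (Ioc (e n) R).indicator φ r) = (Ioc 0 R).indicator φ := by
      funext r
      by_cases hr : r ∈ Ioc (0:ℝ) R
      · rw [indicator_of_mem hr]
        obtain ⟨n, hn⟩ : ∃ n, e n < r := ((tendsto_order.1 he0).2 r hr.1).exists
        apply le_antisymm
        · apply iSup_le
          intro k
          by_cases h : r ∈ Ioc (e k) R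
          · rw [indicator_of_mem h]
          · rw [indicator_of_notMem h]; exact zero_le
        · exact le_iSup_of_le n (le_of_eq (indicator_of_mem (show r ∈ Ioc (e n) R from ⟨hn, hr.2⟩) φ).symm)
      · have hall : ∀ n, r ∉ Ioc (e n) R := fun n h =>
          hr ⟨lt_trans (hepos n) h.1, h.2⟩
        rw [indicator_of_notMem hr]
        simp only [indicator_of_notMem (hall _)]
        simp
    calc ∫⁻ r in Ioc 0 R, φ r = ∫⁻ r, (Ioc 0 R).indicator φ r :=
          (lintegral_indicator measurableSet_Ioc φ).symm
      _ = ∫⁻ r, ⨆ n, (Ioc (e n) R).indicator φ r := by rw [h4]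
      _ = ⨆ n, ∫⁻ r, (Ioc (e n) R).indicator φ r := h3
      _ = ⨆ n, ENNReal.ofReal (m R - m (e n)) := by
          refine iSup_congr fun n => ?_
          rw [lintegral_indicator measurableSet_Ioc φ, h1 n]
      _ = ENNReal.ofReal (m R) := by
          apply iSup_eq_of_tendsto
          · intro i j hij
            apply ENNReal.ofReal_le_ofReal
            have := hm_mono (heanti hij)
            linarith
          · have : Tendsto (fun n => m R - m (e n)) atTop (nhds (m R - 0)) :=
              tendsto_const_nhds.sub hme0
            rw [sub_zero] at this
            exact ENNReal.tendsto_ofReal this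
  -- integrability of deriv m on (0, R] and its integral
  have hintm0 : IntegrableOn (deriv m) (Ioc 0 R) volume := by
    constructor
    · exact hmeasm.aestronglyMeasurable.restrict
    · rw [hasFiniteIntegral_iff_norm]
      have hcg : ∀ᵐ r ∂(volume.restrict (Ioc 0 R)), ENNReal.ofReal ‖deriv m r‖ = φ r := by
        filter_upwards [ae_restrict_of_ae haem_nonneg] with r hr
        rw [hφ, Real.norm_eq_abs, abs_of_nonneg hr]
      rw [lintegral_congr_ae hcg, hlin]
      exact ENNReal.ofReal_lt_top
  have hvalm0 : ∫ r in Ioc 0 R, deriv m r = m R := by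
    rw [integral_eq_lintegral_of_nonneg_ae (ae_restrict_of_ae haem_nonneg)
      hmeasm.aestronglyMeasurable.restrict]
    rw [hlin]
    exact ENNReal.toReal_ofReal (hm_nonneg R)
  have hne : ∀ᵐ r : ℝ, r ≠ R := by
    rw [ae_iff]
    have hset : {r : ℝ | ¬ r ≠ R} = {R} := by ext r; simp
    rw [hset]
    exact Real.volume_singleton
  have hboundae : ∀ᵐ r ∂(volume.restrict (Ioc 0 R)), |deriv F r| ≤ C * deriv m r := by
    rw [ae_restrict_iff' measurableSet_Ioc]
    filter_upwards [hMain, hne] with r h1 h2 hr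
    exact (h1 ⟨hr.1, lt_of_le_of_ne hr.2 h2⟩).2
  have hintF0 : IntegrableOn (deriv F) (Ioc 0 R) volume := by
    constructor
    · exact (measurable_deriv F).aestronglyMeasurable.restrict
    · rw [hasFiniteIntegral_iff_norm]
      have hb : ∀ᵐ r ∂(volume.restrict (Ioc 0 R)),
          ENNReal.ofReal ‖deriv F r‖ ≤ ENNReal.ofReal C * φ r := by
        filter_upwards [hboundae, ae_restrict_of_ae haem_nonneg] with r h1 h2
        rw [hφ, ← ENNReal.ofReal_mul hCnn, Real.norm_eq_abs]
        exact ENNReal.ofReal_le_ofReal h1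
      calc ∫⁻ r in Ioc 0 R, ENNReal.ofReal ‖deriv F r‖
          ≤ ∫⁻ r in Ioc 0 R, ENNReal.ofReal C * φ r := lintegral_mono_ae hb
        _ = ENNReal.ofReal C * ∫⁻ r in Ioc 0 R, φ r := lintegral_const_mul _ hφmeas
        _ < ⊤ := by rw [hlin]; exact ENNReal.mul_lt_top ENNReal.ofReal_lt_top ENNReal.ofReal_lt_top
  -- splitting and smallness near 0
  have hun : ∀ n, Ioc (0:ℝ) (e n) ∪ Ioc (e n) R = Ioc 0 R :=
    fun n => Ioc_union_Ioc_eq_Ioc (hepos n).le (heR n)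
  have hdisj : ∀ n, Disjoint (Ioc (0:ℝ) (e n)) (Ioc (e n) R) :=
    fun n => Set.disjoint_left.2 fun x h1 h2 => absurd h2.1 (not_lt.2 h1.2)
  have hsub1 : ∀ n, Ioc (0:ℝ) (e n) ⊆ Ioc 0 R := fun n => Ioc_subset_Ioc_right (heR n)
  have hsub2 : ∀ n, Ioc (e n) R ⊆ Ioc (0:ℝ) R := fun n => Ioc_subset_Ioc_left (hepos n).le
  have hsplitF : ∀ n, ∫ r in Ioc 0 R, deriv F r
      = (∫ r in Ioc 0 (e n), deriv F r) + (F R - F (e n)) := by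
    intro n
    obtain ⟨_, _, _, hvalFn, _⟩ := perEps (e n) (hepos n) (heR n)
    rw [← hvalFn, ← hun n, setIntegral_union (hdisj n) measurableSet_Ioc
      (hintF0.mono_set (hsub1 n)) (hintF0.mono_set (hsub2 n))]
  have hsmallm : ∀ n, ∫ r in Ioc 0 (e n), deriv m r = m (e n) := by
    intro n
    obtain ⟨_, _, _, _, hvalmn⟩ := perEps (e n) (hepos n) (heR n)
    have h5 : ∫ r in Ioc 0 R, deriv m r
        = (∫ r in Ioc 0 (e n), deriv m r) + (m R - m (e n)) := by
      rw [← hvalmn, ← hun n, setIntegral_union (hdisj n) measurableSet_Ioc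
        (hintm0.mono_set (hsub1 n)) (hintm0.mono_set (hsub2 n))]
    rw [hvalm0] at h5
    linarith
  have hbnd2 : ∀ n, |∫ r in Ioc 0 (e n), deriv F r| ≤ C * m (e n) := by
    intro n
    have hb : ∀ᵐ r ∂(volume.restrict (Ioc 0 (e n))), |deriv F r| ≤ C * deriv m r :=
      ae_restrict_of_ae_restrict_of_subset (hsub1 n) hboundae
    calc |∫ r in Ioc 0 (e n), deriv F r| ≤ ∫ r in Ioc 0 (e n), |deriv F r| := by
          simpa [Real.norm_eq_abs] using
            norm_integral_le_integral_norm (μ := volume.restrict (Ioc 0 (e n))) (deriv F)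
      _ ≤ ∫ r in Ioc 0 (e n), C * deriv m r := by
          apply integral_mono_ae ((hintF0.mono_set (hsub1 n)).abs)
            ((hintm0.mono_set (hsub1 n)).const_mul C)
          exact hb
      _ = C * ∫ r in Ioc 0 (e n), deriv m r := integral_const_mul C _
      _ = C * m (e n) := by rw [hsmallm n]
  have hFsmall : ∀ n, |F (e n)| ≤ C * m (e n) := by
    intro n
    have h0 : F 0 = 0 := by rw [hFdef]; simp [ball_zero]
    have hm0' : m 0 = 0 := by rw [hmdef]; simp [ball_zero]
    have := hFbnd 0 (e n) (hepos n).le (by linarith [heR n])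
    rw [h0, hm0', sub_zero, sub_zero] at this
    exact this
  have hfinal : ∫ r in Ioc 0 R, deriv F r = F R := by
    have htend : Tendsto (fun n => (∫ r in Ioc 0 (e n), deriv F r) - F (e n)) atTop (nhds 0) := by
      refine squeeze_zero_norm (a := fun n => 2 * C * m (e n)) ?_ ?_
      · intro n
        rw [Real.norm_eq_abs]
        calc |(∫ r in Ioc 0 (e n), deriv F r) - F (e n)|
            ≤ |∫ r in Ioc 0 (e n), deriv F r| + |F (e n)| := abs_sub _ _
          _ ≤ C * m (e n) + C * m (e n) := add_le_add (hbnd2 n) (hFsmall n)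
          _ = 2 * C * m (e n) := by ring
      · have := hme0.const_mul (2 * C)
        simpa using this
    have hconst : Tendsto (fun _ : ℕ => (∫ r in Ioc 0 R, deriv F r) - F R) atTop
        (nhds ((∫ r in Ioc 0 R, deriv F r) - F R)) := tendsto_const_nhds
    have hcongr2 : (fun n : ℕ => (∫ r in Ioc 0 R, deriv F r) - F R)
        = fun n => (∫ r in Ioc 0 (e n), deriv F r) - F (e n) := by
      funext n
      rw [hsplitF n]
      ring
    rw [hcongr2] at hconst
    have := tendsto_nhds_unique hconst htend
    linarith
  -- conclusion
  have hcongr3 : ∫ r in Ioc 0 R, bdryIntegral μ f o r = ∫ r in Ioc 0 R, deriv F r := by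
    apply setIntegral_congr_ae measurableSet_Ioc
    filter_upwards [hMain, hne] with r h1 h2 hr
    exact (h1 ⟨hr.1, lt_of_le_of_ne hr.2 h2⟩).1
  have hgoal : F R = ∫ z in ball o R, f z ∂μ := rfl
  rw [intervalIntegral.integral_of_le hR.le, hcongr3, hfinal, ← hgoal]
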